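/- arXiv:1607.03558 — 8 statements merged into one kernel-verified Lean document; each statement's English description precedes it below -/
import Mathlib

section
/- Let $z, p \in \mathbb{C}$ with $z \neq 0$, $p \neq 0$, and $p \neq 1$. Define the $3 \times 3$ matrices $L'(z,p) := \begin{pmatrix} 0 & 0 & 1 \\ p-1 & 0 & p \\ 0 & z^{-1}(p-1)^{-1} & p(1-p)^{-1} \end{pmatrix}$ and $S(z) := \begin{pmatrix} 1 & 1 & -1 \\ 1 & 1 & z \\ -1 & z^{-1} & 1 \end{pmatrix}$. Then $L'(z,p) \cdot S(z) \cdot L'(z^{-1},p)^{t} = S(z)$, where $X^{t}$ denotes the transpose. (Equivalently, $(L'(z^{-1},p)^{-1})^{t} = S(z)^{-1} L'(z,p) S(z)$.) -/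
open Matrix

/-- The Lax matrix of an inscribed polygon in terms of the inscribed
cross-ratio parameter `p`. -/
noncomputable def Lconic (z p : ℂ) : Matrix (Fin 3) (Fin 3) ℂ :=
  !![0, 0, 1; p - 1, 0, p; 0, z⁻¹ * (p - 1)⁻¹, p * (1 - p)⁻¹]

/-- The intertwining matrix `S(z)`. -/
noncomputable def Smat (z : ℂ) : Matrix (Fin 3) (Fin 3) ℂ :=
  !![1, 1, -1; 1, 1, z; -1, z⁻¹, 1]

theorem Lconic_selfdual (z p : ℂ) (hz : z ≠ 0) (hp : p ≠ 0) (hp1 : p ≠ 1) :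
    Lconic z p * Smat z * (Lconic z⁻¹ p)ᵀ = Smat z := by
  rw [Lconic, Lconic, Smat, show (!![0, 0, 1; p - 1, 0, p; 0, (z⁻¹)⁻¹ * (p - 1)⁻¹, p * (1 - p)⁻¹])ᵀ
      = !![0, p - 1, 0; 0, 0, (z⁻¹)⁻¹ * (p - 1)⁻¹; 1, p, p * (1 - p)⁻¹] from by
      ext i j; fin_cases i <;> fin_cases j <;> rfl,
    Matrix.mul_fin_three, Matrix.mul_fin_three, inv_inv,
    show (1 - p)⁻¹ = -(p - 1)⁻¹ by rw [← inv_neg, neg_sub]]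
  have hp1' : p - 1 ≠ 0 := sub_ne_zero.mpr hp1
  have ha : (p - 1) * (p - 1)⁻¹ = 1 := mul_inv_cancel₀ hp1'
  have hw : z * z⁻¹ = 1 := mul_inv_cancel₀ hz
  ext i j
  fin_cases i <;> fin_cases j
  · simp
  · simp
  · simp; linear_combination (p - 1)⁻¹ * hw - ha
  · simp
  · simp; ring
  · simp; linear_combination z * ha + p * (p - 1)⁻¹ * hw
  · simp; linear_combination (p - 1)⁻¹ * hw - ha
  · simp; linear_combination z⁻¹ * ha + p * (p - 1)⁻¹ * hw
  · simp; linear_combination ((p - 1) * (p - 1)⁻¹ + 1) * ha + (p - 1)⁻¹ ^ 2 * (1 - 2 * p) * hw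
end

section
/- Let $n \ge 1$ and let $p_1, \dots, p_n \in \mathbb{C}$ with $p_j \neq 0$ and $p_j \neq 1$ for all $j$, and let $z \in \mathbb{C}$, $z \neq 0$. Define $L'(z,p) := \begin{pmatrix} 0 & 0 & 1 \\ p-1 & 0 & p \\ 0 & z^{-1}(p-1)^{-1} & p(1-p)^{-1} \end{pmatrix}$, $S(z) := \begin{pmatrix} 1 & 1 & -1 \\ 1 & 1 & z \\ -1 & z^{-1} & 1 \end{pmatrix}$, and $M'(z) := L'(z,p_1) L'(z,p_2) \cdots L'(z,p_n)$. Then $M'(z) \cdot S(z) \cdot M'(z^{-1})^{t} = S(z)$, where $X^{t}$ denotes the transpose. -/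
set_option maxHeartbeats 1000000

open Matrix

/-- The scaled monodromy matrix `M'(z) = L'(z,p₁) ⋯ L'(z,pₙ)`. -/
noncomputable def Mconic (n : ℕ) (p : Fin n → ℂ) (z : ℂ) : Matrix (Fin 3) (Fin 3) ℂ :=
  (List.ofFn fun j : Fin n => Lconic z (p j)).prod

lemma Lconic_step (z p : ℂ) (hz : z ≠ 0) (h1 : p - 1 ≠ 0) (h2 : (1:ℂ) - p ≠ 0) :
    Lconic z p * Smat z * (Lconic z⁻¹ p)ᵀ = Smat z := by
  set A : Matrix (Fin 3) (Fin 3) ℂ :=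
    !![0, 0, (p-1)*z; (p-1)^2*z, 0, p*(p-1)*z; 0, 1, -(p*z)] with hAdef
  set C : Matrix (Fin 3) (Fin 3) ℂ :=
    !![0, 0, p-1; (p-1)^2, 0, p*(p-1); 0, z, -p] with hCdef
  set S' : Matrix (Fin 3) (Fin 3) ℂ :=
    !![z, z, -z; z, z, z^2; -z, 1, z] with hSdef
  have hA : Lconic z p = (((p-1)*z)⁻¹) • A := by
    ext i j
    fin_cases i <;> fin_cases j <;>
      simp [Lconic, hAdef] <;> field_simp <;> ring
  have hC : Lconic z⁻¹ p = ((p-1)⁻¹) • C := by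
    ext i j
    fin_cases i <;> fin_cases j <;>
      simp [Lconic, hCdef] <;> field_simp <;> ring
  have hS : Smat z = (z⁻¹) • S' := by
    ext i j
    fin_cases i <;> fin_cases j <;>
      simp [Smat, hSdef] <;> field_simp <;> ring
  have hCT : Cᵀ = !![0, (p-1)^2, 0; 0, 0, z; p-1, p*(p-1), -p] := by
    rw [hCdef]; ext i j; fin_cases i <;> fin_cases j <;> rfl
  have key : A * S' * Cᵀ = ((p-1)^2 * z) • S' := by
    rw [hCT, hAdef, hSdef]
    simp only [Matrix.mul_fin_three]
    ext i j
    fin_cases i <;> fin_cases j <;>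
      simp <;> ring
  rw [hA, hC, hS, Matrix.transpose_smul, Matrix.smul_mul, Matrix.mul_smul,
    Matrix.smul_mul, Matrix.mul_smul, Matrix.smul_mul, key,
    smul_smul, smul_smul, smul_smul]
  congr 1
  rw [_root_.mul_inv_rev]
  field_simp

lemma list_step (z : ℂ) (hz : z ≠ 0) (l : List ℂ)
    (h : ∀ p ∈ l, p ≠ 0 ∧ p ≠ 1) :
    (l.map (Lconic z)).prod * Smat z * ((l.map (Lconic z⁻¹)).prod)ᵀ = Smat z := by
  induction l with
  | nil => simp
  | cons a t ih =>
    simp only [List.map_cons, List.prod_cons, Matrix.transpose_mul]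
    have ha := h a List.mem_cons_self
    have ih' := ih (fun p hp => h p (List.mem_cons_of_mem a hp))
    have h1 : a - 1 ≠ 0 := sub_ne_zero.mpr ha.2
    have h2 : (1 : ℂ) - a ≠ 0 := sub_ne_zero.mpr (Ne.symm ha.2)
    calc Lconic z a * (t.map (Lconic z)).prod * Smat z *
          (((t.map (Lconic z⁻¹)).prod)ᵀ * (Lconic z⁻¹ a)ᵀ)
        = Lconic z a * ((t.map (Lconic z)).prod * Smat z *
            ((t.map (Lconic z⁻¹)).prod)ᵀ) * (Lconic z⁻¹ a)ᵀ := by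
          simp only [Matrix.mul_assoc]
      _ = Lconic z a * Smat z * (Lconic z⁻¹ a)ᵀ := by rw [ih']
      _ = Smat z := Lconic_step z a hz h1 h2

theorem monodromy_selfdual_twisted (n : ℕ) (hn : 1 ≤ n) (p : Fin n → ℂ)
    (hp0 : ∀ j, p j ≠ 0) (hp1 : ∀ j, p j ≠ 1) (z : ℂ) (hz : z ≠ 0) :
    Mconic n p z * Smat z * (Mconic n p z⁻¹)ᵀ = Smat z := by
  have key := list_step z hz (List.ofFn p) (by
    intro q hq
    obtain ⟨j, rfl⟩ := List.mem_ofFn.mp hq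
    exact ⟨hp0 j, hp1 j⟩)
  have e1 : (List.ofFn p).map (Lconic z) = List.ofFn fun j => Lconic z (p j) := by
    rw [List.map_ofFn]; rfl
  have e2 : (List.ofFn p).map (Lconic z⁻¹) = List.ofFn fun j => Lconic z⁻¹ (p j) := by
    rw [List.map_ofFn]; rfl
  rw [e1, e2] at key
  exact key
end

section
/- Let $n \ge 1$ and let $p_1, \dots, p_n \in \mathbb{C}$ with $p_j \neq 0$ and $p_j \neq 1$ for all $j$, and let $z \in \mathbb{C}$ with $z \neq 0$ and $z \neq -1$. Let $i = \sqrt{-1} \in \mathbb{C}$ and define $L'(z,p) := \begin{pmatrix} 0 & 0 & 1 \\ p-1 & 0 & p \\ 0 & z^{-1}(p-1)^{-1} & p(1-p)^{-1} \end{pmatrix}$, $T(z) := \begin{pmatrix} 1 & 0 & 0 \\ 1 & i & 1 \\ -1 & -i & z^{-1} \end{pmatrix}$ (which is invertible for $z \neq 0, -1$), $M'(z) := L'(z,p_1) \cdots L'(z,p_n)$, and $M(z) := T(z)^{-1} M'(z) T(z)$. Then $M(z) \cdot M(z^{-1})^{t} = I$, where $I$ is the $3 \times 3$ identity matrix; that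 is, $M$ satisfies the self-duality relation $M(z)^{-1} = M(z^{-1})^{t}$. -/
open Matrix Complex

/-- The factor `T(z)` of the intertwining matrix `S(z)`. -/
noncomputable def Tmat (z : ℂ) : Matrix (Fin 3) (Fin 3) ℂ :=
  !![1, 0, 0; 1, I, 1; -1, -I, z⁻¹]

/-- The self-dual scaled monodromy matrix `M(z) = T(z)⁻¹ M'(z) T(z)`. -/
noncomputable def Mselfdual (n : ℕ) (p : Fin n → ℂ) (z : ℂ) : Matrix (Fin 3) (Fin 3) ℂ :=
  (Tmat z)⁻¹ * Mconic n p z * Tmat z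

/-- The invariant bilinear form `Q(z) = T(z) T(z⁻¹)ᵀ`. -/
noncomputable def Qmat (z : ℂ) : Matrix (Fin 3) (Fin 3) ℂ :=
  !![1, 1, -1; 1, 1, z; -1, z⁻¹, 1]

lemma Tmat_mul_Tmat_inv_transpose (z : ℂ) (hz : z ≠ 0) :
    Tmat z * (Tmat z⁻¹)ᵀ = Qmat z := by
  ext i j
  fin_cases i <;> fin_cases j <;>
    · simp only [Tmat, Qmat, Matrix.mul_apply, Fin.sum_univ_three, Matrix.transpose_apply,
        Matrix.cons_val', Matrix.cons_val_zero, Matrix.cons_val_one, Matrix.head_cons,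
        Matrix.empty_val', Matrix.cons_val_fin_one, Matrix.head_fin_const, Matrix.cons_val_two,
        Matrix.tail_cons, inv_inv]
      ring_nf
      try simp [Complex.I_sq, mul_inv_cancel₀ hz, inv_mul_cancel₀ hz]
      try ring

set_option maxHeartbeats 1000000 in
lemma Lconic_invariant (z q : ℂ) (hz : z ≠ 0) (hq0 : q ≠ 0) (hq1 : q ≠ 1) :
    Lconic z q * Qmat z * (Lconic z⁻¹ q)ᵀ = Qmat z := by
  have h1 : q - 1 ≠ 0 := sub_ne_zero.mpr hq1
  ext i j
  fin_cases i <;> fin_cases j <;>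
    · simp only [Lconic, Qmat, Matrix.mul_apply, Fin.sum_univ_three, Matrix.transpose_apply,
        Matrix.cons_val', Matrix.cons_val_zero, Matrix.cons_val_one, Matrix.head_cons,
        Matrix.empty_val', Matrix.cons_val_fin_one, Matrix.head_fin_const, Matrix.cons_val_two,
        Matrix.tail_cons, Matrix.of_apply, Fin.zero_eta, Fin.mk_one, Fin.reduceFinMk, Fin.isValue]
      try simp only [show (1:ℂ) - q = -(q - 1) by ring, inv_neg]
      field_simp
      try first
        | ring1
        | (rw [div_eq_one_iff_eq (by simp [mul_ne_zero_iff, hz, h1])]; ring1)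

lemma list_invariant (z : ℂ) (hz : z ≠ 0) (l : List ℂ)
    (h : ∀ q ∈ l, q ≠ 0 ∧ q ≠ 1) :
    (l.map (Lconic z)).prod * Qmat z * ((l.map (Lconic z⁻¹)).prod)ᵀ = Qmat z := by
  induction l with
  | nil => simp
  | cons a t ih =>
      have ha := h a List.mem_cons_self
      have ht : ∀ q ∈ t, q ≠ 0 ∧ q ≠ 1 := fun q hq => h q (List.mem_cons_of_mem a hq)
      simp only [List.map_cons, List.prod_cons, Matrix.transpose_mul]
      calc Lconic z a * (t.map (Lconic z)).prod * Qmat z *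
            (((t.map (Lconic z⁻¹)).prod)ᵀ * (Lconic z⁻¹ a)ᵀ)
          = Lconic z a * ((t.map (Lconic z)).prod * Qmat z *
              ((t.map (Lconic z⁻¹)).prod)ᵀ) * (Lconic z⁻¹ a)ᵀ := by
            simp only [Matrix.mul_assoc]
        _ = Lconic z a * Qmat z * (Lconic z⁻¹ a)ᵀ := by rw [ih ht]
        _ = Qmat z := Lconic_invariant z a hz ha.1 ha.2

lemma Mconic_invariant (n : ℕ) (p : Fin n → ℂ) (hp0 : ∀ j, p j ≠ 0) (hp1 : ∀ j, p j ≠ 1)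
    (z : ℂ) (hz : z ≠ 0) :
    Mconic n p z * Qmat z * (Mconic n p z⁻¹)ᵀ = Qmat z := by
  have e : ∀ w : ℂ, Mconic n p w = ((List.ofFn p).map (Lconic w)).prod := by
    intro w; rw [List.map_ofFn]; rfl
  rw [e z, e z⁻¹]
  exact list_invariant z hz (List.ofFn p) (by
    intro q hq
    obtain ⟨j, rfl⟩ := (List.mem_ofFn (f := p) (a := q)).mp hq
    exact ⟨hp0 j, hp1 j⟩)

lemma Tmat_det_isUnit (w : ℂ) (hw : w ≠ 0) (hw1 : w ≠ -1) : IsUnit (Tmat w).det := by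
  have : (Tmat w).det = Complex.I * (w⁻¹ + 1) := by
    simp [Tmat, Matrix.det_fin_three]; ring
  rw [this]
  refine IsUnit.mul Complex.I_ne_zero.isUnit (isUnit_iff_ne_zero.mpr ?_)
  intro h
  have h2 : w⁻¹ = -1 := by linear_combination h
  rw [inv_eq_iff_eq_inv, inv_neg, inv_one] at h2
  exact hw1 h2

theorem monodromy_selfdual (n : ℕ) (hn : 1 ≤ n) (p : Fin n → ℂ)
    (hp0 : ∀ j, p j ≠ 0) (hp1 : ∀ j, p j ≠ 1) (z : ℂ) (hz : z ≠ 0) (hz1 : z ≠ -1) :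
    Mselfdual n p z * (Mselfdual n p z⁻¹)ᵀ = 1 := by
  have hzi : z⁻¹ ≠ 0 := inv_ne_zero hz
  have hzi1 : z⁻¹ ≠ -1 := by
    intro h
    apply hz1
    rw [inv_eq_iff_eq_inv, inv_neg, inv_one] at h
    exact h
  have hT := Tmat_det_isUnit z hz hz1
  have hT' := Tmat_det_isUnit z⁻¹ hzi hzi1
  have key := Mconic_invariant n p hp0 hp1 z hz
  have hQ := Tmat_mul_Tmat_inv_transpose z hz
  unfold Mselfdual
  rw [Matrix.transpose_mul, Matrix.transpose_mul, Matrix.transpose_nonsing_inv]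
  -- goal: T⁻¹ M T * (T'ᵀ * (M'ᵀ * (T'ᵀ)⁻¹)) = 1 roughly
  have hTT' : Tmat z * (Tmat z⁻¹)ᵀ = Qmat z := hQ
  calc (Tmat z)⁻¹ * Mconic n p z * Tmat z *
        ((Tmat z⁻¹)ᵀ * ((Mconic n p z⁻¹)ᵀ * ((Tmat z⁻¹)ᵀ)⁻¹))
      = (Tmat z)⁻¹ * (Mconic n p z * (Tmat z * (Tmat z⁻¹)ᵀ) * (Mconic n p z⁻¹)ᵀ) *
          ((Tmat z⁻¹)ᵀ)⁻¹ := by simp only [Matrix.mul_assoc]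
    _ = (Tmat z)⁻¹ * Qmat z * ((Tmat z⁻¹)ᵀ)⁻¹ := by rw [hTT', key]
    _ = (Tmat z)⁻¹ * (Tmat z * (Tmat z⁻¹)ᵀ) * ((Tmat z⁻¹)ᵀ)⁻¹ := by rw [hTT']
    _ = 1 := by
        rw [← Matrix.mul_assoc, Matrix.nonsing_inv_mul _ hT, Matrix.one_mul,
          Matrix.mul_nonsing_inv _ (by rwa [Matrix.det_transpose])]
end

section
/- Let $n \ge 1$. Let $V : \mathbb{Z} \to \mathbb{C}^3$ and $a, b : \mathbb{Z} \to \mathbb{C}$ satisfy, for every $i \in \mathbb{Z}$: $\det(V_i, V_{i+1}, V_{i+2}) = 1$ (determinant of the matrix with these columns) and $V_{i+3} = a_i V_{i+2} + b_i V_{i+1} + V_i$. Let $\tilde{M}$ be an invertible $3 \times 3$ complex matrix and $t : \mathbb{Z} \to \mathbb{C}$ satisfy $\tilde{M} V_i = t_i V_{i+n}$ for all $i$. Then for every $i \in \mathbb{Z}$: $t_i \, a_{i+n} = t_{i+2} \, a_i$ and $t_i \, b_{i+n} = t_{i+1} \, b_i$. -/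
open Matrix

/-- The 3×3 matrix whose columns are the vectors `v0, v1, v2`. -/
def colMat (v0 v1 v2 : Fin 3 → ℂ) : Matrix (Fin 3) (Fin 3) ℂ :=
  Matrix.of fun i j => ![v0, v1, v2] j i

lemma mul_colMat (M : Matrix (Fin 3) (Fin 3) ℂ) (v0 v1 v2 : Fin 3 → ℂ) :
    M * colMat v0 v1 v2 = colMat (M.mulVec v0) (M.mulVec v1) (M.mulVec v2) := by
  ext i j
  fin_cases j <;>
    simp [colMat, Matrix.mul_apply, Matrix.mulVec, dotProduct]

lemma colMat_smul (c0 c1 c2 : ℂ) (v0 v1 v2 : Fin 3 → ℂ) :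
    colMat (c0 • v0) (c1 • v1) (c2 • v2) = colMat v0 v1 v2 * Matrix.diagonal ![c0, c1, c2] := by
  ext i j
  fin_cases j <;>
    simp [colMat, Matrix.mul_apply, Matrix.diagonal, Fin.sum_univ_three, mul_comm]

lemma det_colMat_smul (c0 c1 c2 : ℂ) (v0 v1 v2 : Fin 3 → ℂ) :
    (colMat (c0 • v0) (c1 • v1) (c2 • v2)).det = c0 * c1 * c2 * (colMat v0 v1 v2).det := by
  rw [colMat_smul, Matrix.det_mul, Matrix.det_diagonal, Fin.prod_univ_three]
  simp [mul_comm, mul_assoc, mul_left_comm]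

lemma mulVec_colMat (v0 v1 v2 : Fin 3 → ℂ) (x0 x1 x2 : ℂ) :
    (colMat v0 v1 v2).mulVec ![x0, x1, x2] = x0 • v0 + x1 • v1 + x2 • v2 := by
  ext i
  simp [colMat, Matrix.mulVec, dotProduct, Fin.sum_univ_three, mul_comm]

lemma indep_of_det (v0 v1 v2 : Fin 3 → ℂ) (h : (colMat v0 v1 v2).det = 1)
    (c d : ℂ) (hcd : c • v1 + d • v2 = 0) : c = 0 ∧ d = 0 := by
  have hu : IsUnit (colMat v0 v1 v2).det := by rw [h]; exact isUnit_one
  have hzero : (colMat v0 v1 v2).mulVec ![0, c, d] = 0 := by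
    rw [mulVec_colMat]; simpa using hcd
  have hx : (![0, c, d] : Fin 3 → ℂ) = 0 :=
    Matrix.eq_zero_of_mulVec_eq_zero (by rw [h]; exact one_ne_zero) hzero
  constructor
  · have := congrFun hx 1; simpa using this
  · have := congrFun hx 2; simpa using this

theorem recurrence_quasiperiodicity (n : ℕ) (hn : 1 ≤ n)
    (V : ℤ → Fin 3 → ℂ) (a b : ℤ → ℂ)
    (hdet : ∀ i : ℤ, (colMat (V i) (V (i + 1)) (V (i + 2))).det = 1)
    (hrec : ∀ i : ℤ, V (i + 3) = a i • V (i + 2) + b i • V (i + 1) + V i)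
    (M : Matrix (Fin 3) (Fin 3) ℂ) (hM : IsUnit M.det)
    (t : ℤ → ℂ) (hmon : ∀ i : ℤ, M.mulVec (V i) = t i • V (i + n)) :
    ∀ i : ℤ, t i * a (i + n) = t (i + 2) * a i ∧ t i * b (i + n) = t (i + 1) * b i := by
  -- product relation
  have htt : ∀ i : ℤ, t i * t (i + 1) * t (i + 2) = M.det := by
    intro i
    have h1 : M * colMat (V i) (V (i + 1)) (V (i + 2)) =
        colMat (t i • V (i + n)) (t (i + 1) • V (i + 1 + n)) (t (i + 2) • V (i + 2 + n)) := by
      rw [mul_colMat, hmon, hmon, hmon]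
    have h2 := congrArg Matrix.det h1
    rw [Matrix.det_mul, hdet, mul_one, det_colMat_smul] at h2
    have e1 : i + 1 + n = i + n + 1 := by ring
    have e2 : i + 2 + n = i + n + 2 := by ring
    rw [e1, e2, hdet, mul_one] at h2
    exact h2.symm
  have ht0 : ∀ i : ℤ, t i ≠ 0 := by
    intro i hti
    have h := htt i
    rw [hti, zero_mul, zero_mul] at h
    exact hM.ne_zero h.symm
  have hper : ∀ i : ℤ, t (i + 3) = t i := by
    intro i
    have h1 := htt i
    have h2 := htt (i + 1)
    have e1 : i + 1 + 1 = i + 2 := by ring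
    have e2 : i + 1 + 2 = i + 3 := by ring
    rw [e1, e2] at h2
    have : t i * t (i + 1) * t (i + 2) = t (i + 1) * t (i + 2) * t (i + 3) := by
      rw [h1, h2]
    have h3 : t (i + 1) * t (i + 2) ≠ 0 := mul_ne_zero (ht0 _) (ht0 _)
    field_simp at this
    have : t i * (t (i + 1) * t (i + 2)) = t (i + 3) * (t (i + 1) * t (i + 2)) := by
      linear_combination this
    exact (mul_right_cancel₀ h3 this).symm
  intro i
  -- apply M to recurrence at i
  have key : M.mulVec (V (i + 3)) =
      a i • (t (i + 2) • V (i + 2 + n)) + b i • (t (i + 1) • V (i + 1 + n)) + t i • V (i + n) := by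
    rw [hrec i]
    rw [Matrix.mulVec_add, Matrix.mulVec_add, Matrix.mulVec_smul, Matrix.mulVec_smul,
      hmon, hmon, hmon]
  rw [hmon, hper] at key
  -- recurrence at i + n scaled by t i
  have key2 : t i • V (i + n + 3) =
      (t i * a (i + n)) • V (i + n + 2) + (t i * b (i + n)) • V (i + n + 1) + t i • V (i + n) := by
    rw [hrec (i + n)]
    simp [smul_add, smul_smul]
  have e1 : i + 3 + n = i + n + 3 := by ring
  have e2 : i + 2 + n = i + n + 2 := by ring
  have e3 : i + 1 + n = i + n + 1 := by ring
  rw [e1, e2, e3] at key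
  have hdiff : (t i * a (i + n) - a i * t (i + 2)) • V (i + n + 1 + 1) +
      (t i * b (i + n) - b i * t (i + 1)) • V (i + n + 1) = 0 := by
    have := key2.symm.trans key
    have e4 : i + n + 1 + 1 = i + n + 2 := by ring
    rw [e4]
    have h := sub_eq_zero.mpr this
    rw [show (t i * a (i+n)) • V (i+n+2) + (t i * b (i+n)) • V (i+n+1) + t i • V (i+n)
        - (a i • (t (i+2) • V (i+n+2)) + b i • (t (i+1) • V (i+n+1)) + t i • V (i+n))
        = (t i * a (i+n) - a i * t (i+2)) • V (i+n+2)
        + (t i * b (i+n) - b i * t (i+1)) • V (i+n+1) by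
      simp [smul_smul, sub_smul]; abel] at h
    exact h
  have hd := hdet (i + n + 1)
  have e5 : i + n + 1 + 2 = i + n + 1 + 1 + 1 := by ring
  have hd2 := hdet (i + n)
  have e6 : i + n + 1 + 1 = i + n + 2 := by ring
  have := indep_of_det (V (i + n)) (V (i + n + 1)) (V (i + n + 2)) hd2
    (t i * b (i + n) - b i * t (i + 1)) (t i * a (i + n) - a i * t (i + 2))
    (by rw [← e6]; linear_combination (norm := module) hdiff)
  constructor
  · linear_combination this.2
  · linear_combination this.1
end

section
/- Let $R$ be a commutative ring, let $x, y, u \in R$ (where $u$ stands for $z^{-1}$), and define $L := \begin{pmatrix} 0 & 0 & 1 \\ -xy & 0 & 1 \\ 0 & -u y & 1 \end{pmatrix}$, $\hat{L} := \begin{pmatrix} 1 & 0 & 1 \\ 1 - xy & 0 & 1 \\ 0 & -u y & 0 \end{pmatrix}$, and $U := \begin{pmatrix} 1 & 0 & 0 \\ 0 & 1 & 0 \\ 1 & 0 & 1 \end{pmatrix}$. Then $U$ is invertible and $L = U \hat{L} U^{-1}$. -/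
open Matrix

theorem Lax_conjugate_positive (R : Type*) [CommRing R] (x y u : R) :
    IsUnit (!![1, 0, 0; 0, 1, 0; 1, 0, 1] : Matrix (Fin 3) (Fin 3) R).det ∧
    (!![0, 0, 1; -(x * y), 0, 1; 0, -(u * y), 1] : Matrix (Fin 3) (Fin 3) R)
      = !![1, 0, 0; 0, 1, 0; 1, 0, 1] * !![1, 0, 1; 1 - x * y, 0, 1; 0, -(u * y), 0]
          * (!![1, 0, 0; 0, 1, 0; 1, 0, 1] : Matrix (Fin 3) (Fin 3) R)⁻¹ := by
  have h : IsUnit (!![1, 0, 0; 0, 1, 0; 1, 0, 1] : Matrix (Fin 3) (Fin 3) R).det := by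
    simp [Matrix.det_fin_three]
  refine ⟨h, ?_⟩
  haveI := (!![1, 0, 0; 0, 1, 0; 1, 0, 1] : Matrix (Fin 3) (Fin 3) R).invertibleOfIsUnitDet h
  rw [eq_comm, Matrix.mul_inv_eq_iff_eq_mul_of_invertible]
  ext i j
  fin_cases i <;> fin_cases j <;>
    simp [Matrix.mul_apply, Fin.sum_univ_three] <;> ring
end

section
/- Let $R$ be a commutative ring, let $x, y, z \in R$, and define $L^* := \begin{pmatrix} 1 & -1 & 0 \\ xz & 0 & -xz \\ xy & 0 & 0 \end{pmatrix}$, $\hat{L}^* := \begin{pmatrix} 0 & 1 & 1-xy \\ -xz & 0 & 0 \\ 0 & 1 & 1 \end{pmatrix}$, and $V := \begin{pmatrix} 0 & 0 & 1 \\ 0 & -1 & 0 \\ -1 & 0 & 1 \end{pmatrix}$. Then $V$ is invertible and $L^* = V \hat{L}^* V^{-1}$. -/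
open Matrix

theorem adjugate_Lax_conjugate_positive (R : Type*) [CommRing R] (x y z : R) :
    IsUnit (!![0, 0, 1; 0, -1, 0; -1, 0, 1] : Matrix (Fin 3) (Fin 3) R).det ∧
    (!![1, -1, 0; x * z, 0, -(x * z); x * y, 0, 0] : Matrix (Fin 3) (Fin 3) R)
      = !![0, 0, 1; 0, -1, 0; -1, 0, 1] * !![0, 1, 1 - x * y; -(x * z), 0, 0; 0, 1, 1]
          * (!![0, 0, 1; 0, -1, 0; -1, 0, 1] : Matrix (Fin 3) (Fin 3) R)⁻¹ := by
  have hdet : (!![0, 0, 1; 0, -1, 0; -1, 0, 1] : Matrix (Fin 3) (Fin 3) R).det = -1 := by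
    simp [Matrix.det_fin_three]
  have hu : IsUnit (!![0, 0, 1; 0, -1, 0; -1, 0, 1] : Matrix (Fin 3) (Fin 3) R).det := by
    rw [hdet]; exact isUnit_one.neg
  refine ⟨hu, ?_⟩
  have : Invertible (!![0, 0, 1; 0, -1, 0; -1, 0, 1] : Matrix (Fin 3) (Fin 3) R) :=
    Matrix.invertibleOfIsUnitDet _ hu
  rw [eq_comm, Matrix.mul_inv_eq_iff_eq_mul_of_invertible]
  ext i j
  fin_cases i <;> fin_cases j <;> simp [Matrix.mul_apply, Fin.sum_univ_succ] <;> ring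
end

section
/- Let $n \ge 3$ and let $x_1, \dots, x_n, y_1, \dots, y_n$ be real numbers with $0 < x_j < 1$ and $0 < y_j < 1$ for all $j$. Over the polynomial ring $\mathbb{R}[s]$, define the $3 \times 3$ matrices $\hat{L}_j(s) := \begin{pmatrix} 1 & 0 & 1 \\ 1 - x_j y_j & 0 & 1 \\ 0 & s \, y_j & 0 \end{pmatrix}$ and set $P(s) := \mathrm{trace}\big(\hat{L}_1(s) \hat{L}_2(s) \cdots \hat{L}_n(s)\big) \in \mathbb{R}[s]$. Then for every integer $k$ with $1 \le k \le \lfloor n/2 \rfloor$, the coefficient of $s^k$ in $P(s)$ is strictly positive. -/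
open Matrix Polynomial

/-- The conjugated Lax matrix `L̂ⱼ(s)` over `ℝ[s]`, with corner invariants
`x j`, `y j`. -/
noncomputable def LhatPoly (n : ℕ) (x y : Fin n → ℝ) (j : Fin n) :
    Matrix (Fin 3) (Fin 3) ℝ[X] :=
  !![1, 0, 1;
     C (1 - x j * y j), 0, 1;
     0, X * C (y j), 0]

namespace EvenPosAux

def Pnn (p : ℝ[X]) : Prop := ∀ m, 0 ≤ p.coeff m
def Ple (p q : ℝ[X]) : Prop := ∀ m, p.coeff m ≤ q.coeff m

lemma Ple.refl (p : ℝ[X]) : Ple p p := fun _ => le_rfl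
lemma Ple.trans {p q r} (h1 : Ple p q) (h2 : Ple q r) : Ple p r := fun m => (h1 m).trans (h2 m)

lemma Pnn.one : Pnn (1 : ℝ[X]) := fun m => by
  rw [coeff_one]; split_ifs <;> norm_num
lemma Pnn.zero : Pnn (0 : ℝ[X]) := fun m => by simp
lemma Pnn.Xp : Pnn (X : ℝ[X]) := fun m => by
  rw [coeff_X]; split_ifs <;> norm_num
lemma Pnn.C' {a : ℝ} (h : 0 ≤ a) : Pnn (C a) := fun m => by
  rw [coeff_C]; split_ifs <;> simp [h]
lemma Pnn.mul {p q} (hp : Pnn p) (hq : Pnn q) : Pnn (p * q) := fun m => by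
  rw [coeff_mul]
  exact Finset.sum_nonneg fun z _ => mul_nonneg (hp _) (hq _)
lemma Pnn.XC {a : ℝ} (h : 0 ≤ a) : Pnn (X * C a) := Pnn.Xp.mul (Pnn.C' h)
lemma Pnn.pow {p} (hp : Pnn p) : ∀ k, Pnn (p ^ k)
  | 0 => by rw [pow_zero]; exact Pnn.one
  | (k+1) => by rw [pow_succ]; exact (Pnn.pow hp k).mul hp

lemma Ple.C' {a b : ℝ} (h : a ≤ b) : Ple (C a) (C b) := fun m => by
  rw [coeff_C, coeff_C]; split_ifs <;> simp [h]
lemma Ple.mul {p p' q q' : ℝ[X]} (hp' : Pnn p') (hq' : Pnn q') (h1 : Ple p' p) (h2 : Ple q' q) :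
    Ple (p' * q') (p * q) := fun m => by
  rw [coeff_mul, coeff_mul]
  refine Finset.sum_le_sum fun z _ => ?_
  exact mul_le_mul (h1 _) (h2 _) (hq' _) ((hp' _).trans (h1 _))
lemma Ple.XC {a b : ℝ} (h0 : 0 ≤ a) (h : a ≤ b) : Ple (X * C a) (X * C b) :=
  Ple.mul Pnn.Xp (Pnn.C' h0) (Ple.refl X) (Ple.C' h)

abbrev Mat := Matrix (Fin 3) (Fin 3) ℝ[X]

def MNn (A : Mat) : Prop := ∀ i j, Pnn (A i j)
def MLe (A B : Mat) : Prop := ∀ i j, Ple (A i j) (B i j)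

lemma Pnn.sum {α : Type*} {s : Finset α} {f : α → ℝ[X]} (h : ∀ a ∈ s, Pnn (f a)) :
    Pnn (∑ a ∈ s, f a) := fun m => by
  rw [finset_sum_coeff]
  exact Finset.sum_nonneg fun a ha => h a ha m

lemma MNn.one : MNn (1 : Mat) := fun i j => by
  rw [Matrix.one_apply]; split_ifs
  · exact Pnn.one
  · exact Pnn.zero
lemma MNn.mul {A B : Mat} (hA : MNn A) (hB : MNn B) : MNn (A * B) := fun i j => by
  rw [Matrix.mul_apply]
  exact Pnn.sum fun l _ => (hA i l).mul (hB l j)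
lemma MNn.pow {A : Mat} (hA : MNn A) : ∀ k, MNn (A ^ k)
  | 0 => by rw [pow_zero]; exact MNn.one
  | (k+1) => by rw [pow_succ]; exact (MNn.pow hA k).mul hA

lemma entry_mul_le {A B : Mat} (hA : MNn A) (hB : MNn B) (i l j : Fin 3) :
    Ple (A i l * B l j) ((A * B) i j) := fun m => by
  rw [Matrix.mul_apply, finset_sum_coeff]
  exact Finset.single_le_sum (f := fun l' => (A i l' * B l' j).coeff m)
    (fun l' _ => ((hA i l').mul (hB l' j)) m) (Finset.mem_univ l)

lemma MLe.mul {A A' B B' : Mat} (hA' : MNn A') (hB' : MNn B') (h1 : MLe A' A) (h2 : MLe B' B) :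
    MLe (A' * B') (A * B) := fun i j m => by
  rw [Matrix.mul_apply, Matrix.mul_apply, finset_sum_coeff, finset_sum_coeff]
  exact Finset.sum_le_sum fun l _ => Ple.mul (hA' i l) (hB' l j) (h1 i l) (h2 l j) m

/-- The uniform lower-bound matrix. -/
noncomputable def Mlow (ε : ℝ) : Mat :=
  !![1, 0, 1; C ε, 0, 1; 0, X * C ε, 0]

lemma MNn_Mlow {ε : ℝ} (hε : 0 ≤ ε) : MNn (Mlow ε) := by
  intro i j
  fin_cases i <;> fin_cases j <;> simp only [Mlow, Matrix.cons_val', Matrix.cons_val_zero,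
    Matrix.cons_val_one, Matrix.head_cons, Matrix.empty_val', Matrix.cons_val_fin_one,
    Matrix.head_fin_const, Matrix.cons_val_two, Matrix.tail_cons]
  · exact Pnn.one
  · exact Pnn.zero
  · exact Pnn.one
  · exact Pnn.C' hε
  · exact Pnn.zero
  · exact Pnn.one
  · exact Pnn.zero
  · exact Pnn.XC hε
  · exact Pnn.zero

/-- The `2→1→2` "s-cycle" lower bound: `(M^(2k))(2,2) ≥ (ε s)^k` coefficientwise. -/
lemma key22 {ε : ℝ} (hε : 0 ≤ ε) : ∀ k, Ple ((C ε * X) ^ k) ((Mlow ε ^ (2 * k)) 2 2) := by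
  intro k
  induction k with
  | zero => simpa [Matrix.one_apply] using Ple.refl (1 : ℝ[X])
  | succ k ih =>
    have hM := MNn_Mlow hε
    have hMk := hM.pow (2 * k)
    have hM2 := hM.pow 2
    have hMM : Ple (X * C ε) ((Mlow ε ^ 2) 2 2) := by
      have h := entry_mul_le hM hM 2 1 2
      have e1 : Mlow ε 2 1 = X * C ε := by simp [Mlow]
      have e2 : Mlow ε 1 2 = 1 := by simp [Mlow]
      rw [e1, e2, mul_one] at h
      rw [pow_two]
      exact h
    have hsplit : Mlow ε ^ (2 * (k + 1)) = Mlow ε ^ (2 * k) * Mlow ε ^ 2 := by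
      rw [show 2 * (k + 1) = 2 * k + 2 by ring, pow_add]
    rw [hsplit]
    refine Ple.trans ?_ (entry_mul_le hMk hM2 2 2 2)
    have hrw : (C ε * X) ^ (k + 1) = (C ε * X) ^ k * (X * C ε) := by
      rw [pow_succ]; ring
    rw [hrw]
    exact Ple.mul (((Pnn.C' hε).mul Pnn.Xp).pow k) (Pnn.XC hε) ih hMM

/-- `(M^a)(0,0) ≥ 1` coefficientwise. -/
lemma key00 {ε : ℝ} (hε : 0 ≤ ε) : ∀ a, Ple 1 ((Mlow ε ^ a) 0 0) := by
  intro a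
  induction a with
  | zero => simpa [Matrix.one_apply] using Ple.refl (1 : ℝ[X])
  | succ a ih =>
    have hM := MNn_Mlow hε
    have hMa := hM.pow a
    have h := entry_mul_le hMa hM 0 0 0
    have e : Mlow ε 0 0 = 1 := by simp [Mlow]
    rw [e, mul_one] at h
    rw [pow_succ]
    exact Ple.trans (by simpa using ih) h

/-- Products of matrices dominating `Mlow ε` dominate its power. -/
lemma prod_bound {ε : ℝ} (hε : 0 ≤ ε) :
    ∀ l : List Mat, (∀ A ∈ l, MNn A ∧ MLe (Mlow ε) A) →
      MNn l.prod ∧ MLe (Mlow ε ^ l.length) l.prod := by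
  intro l
  induction l with
  | nil =>
    intro _
    exact ⟨MNn.one, by simp only [List.length_nil, pow_zero, List.prod_nil]; exact fun i j => Ple.refl _⟩
  | cons A l ih =>
    intro h
    have hA := h A (List.mem_cons_self (a := A) (l := l))
    have hl := ih fun B hB => h B (List.mem_cons_of_mem A hB)
    constructor
    · rw [List.prod_cons]
      exact hA.1.mul hl.1
    · rw [List.prod_cons, List.length_cons, pow_succ']
      exact MLe.mul (MNn_Mlow hε) ((MNn_Mlow hε).pow _) hA.2 hl.2

lemma MNn_Lhat {n : ℕ} {x y : Fin n → ℝ} (j : Fin n)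
    (h1 : 0 ≤ 1 - x j * y j) (h2 : 0 ≤ y j) : MNn (LhatPoly n x y j) := by
  have e : (1 : ℝ[X]) - C (x j) * C (y j) = C (1 - x j * y j) := by
    rw [← C_mul, ← C_1, ← C_sub]
  intro i i'
  fin_cases i <;> fin_cases i' <;> simp [LhatPoly]
  · exact Pnn.one
  · exact Pnn.zero
  · exact Pnn.one
  · exact e ▸ Pnn.C' h1
  · exact Pnn.zero
  · exact Pnn.one
  · exact Pnn.zero
  · exact (Pnn.C' h2).mul Pnn.Xp
  · exact Pnn.zero

lemma MLe_Mlow_Lhat {ε : ℝ} (hε : 0 ≤ ε) {n : ℕ} {x y : Fin n → ℝ} (j : Fin n)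
    (h1 : ε ≤ 1 - x j * y j) (h2 : ε ≤ y j) : MLe (Mlow ε) (LhatPoly n x y j) := by
  have e : (1 : ℝ[X]) - C (x j) * C (y j) = C (1 - x j * y j) := by
    rw [← C_mul, ← C_1, ← C_sub]
  intro i i'
  fin_cases i <;> fin_cases i' <;> simp [LhatPoly, Mlow]
  · exact Ple.refl _
  · exact Ple.refl _
  · exact Ple.refl _
  · exact e ▸ Ple.C' h1
  · exact Ple.refl _
  · exact Ple.refl _
  · exact Ple.refl _
  · exact Ple.mul (Pnn.C' hε) Pnn.Xp (Ple.C' h2) (Ple.refl X)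
  · exact Ple.refl _

end EvenPosAux

open EvenPosAux in
theorem even_invariants_positive_convex (n : ℕ) (hn : 3 ≤ n)
    (x y : Fin n → ℝ) (hx : ∀ j, 0 < x j ∧ x j < 1) (hy : ∀ j, 0 < y j ∧ y j < 1) :
    ∀ k : ℕ, 1 ≤ k → k ≤ n / 2 →
      0 < (((List.ofFn fun j : Fin n => LhatPoly n x y j).prod).trace).coeff k := by
  intro k hk1 hk2
  have hk2' : 2 * k ≤ n := by omega
  haveI : Nonempty (Fin n) := ⟨⟨0, by omega⟩⟩
  set ε := Finset.univ.inf' Finset.univ_nonempty (fun j : Fin n => min (y j) (1 - x j * y j))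
    with hεdef
  have hεpos : 0 < ε := by
    rw [hεdef, Finset.lt_inf'_iff]
    intro j _
    refine lt_min (hy j).1 ?_
    nlinarith [(hx j).1, (hx j).2, (hy j).1, (hy j).2]
  have hεy : ∀ j, ε ≤ y j := fun j =>
    le_trans (Finset.inf'_le _ (Finset.mem_univ j)) (min_le_left _ _)
  have hεxy : ∀ j, ε ≤ 1 - x j * y j := fun j =>
    le_trans (Finset.inf'_le _ (Finset.mem_univ j)) (min_le_right _ _)
  have hε0 : (0 : ℝ) ≤ ε := hεpos.le
  have hM := MNn_Mlow hε0
  have hMNnL : ∀ j, MNn (LhatPoly n x y j) := fun j =>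
    MNn_Lhat j (le_trans hε0 (hεxy j)) (hy j).1.le
  have hMle : ∀ j, MLe (Mlow ε) (LhatPoly n x y j) := fun j =>
    MLe_Mlow_Lhat hε0 j (hεxy j) (hεy j)
  have hPB := prod_bound hε0 (List.ofFn fun j : Fin n => LhatPoly n x y j) (by
    intro A hA
    rw [List.mem_ofFn] at hA
    obtain ⟨j, rfl⟩ := hA
    exact ⟨hMNnL j, hMle j⟩)
  set P := (List.ofFn fun j : Fin n => LhatPoly n x y j).prod with hPdef
  have hPnn : MNn P := hPB.1
  have hPle : MLe (Mlow ε ^ n) P := by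
    have := hPB.2
    rwa [List.length_ofFn] at this
  have htr : P.trace.coeff k = (P 0 0).coeff k + (P 1 1).coeff k + (P 2 2).coeff k := by
    rw [Matrix.trace_fin_three, coeff_add, coeff_add]
  have h00 := hPnn 0 0 k
  have h11 := hPnn 1 1 k
  have h22 := hPnn 2 2 k
  rcases eq_or_lt_of_le hk2' with heq | hlt
  · -- n = 2k : use the (2,2) entry
    have hkey := key22 hε0 k
    rw [heq] at hkey
    have h2 : ((C ε * X) ^ k).coeff k ≤ (P 2 2).coeff k :=
      le_trans (hkey k) (hPle 2 2 k)
    have hc : ((C ε * X) ^ k).coeff k = ε ^ k := by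
      rw [mul_pow, ← C_pow, coeff_C_mul, coeff_X_pow]
      simp
    have hp : 0 < ε ^ k := pow_pos hεpos k
    rw [htr]
    linarith [hc ▸ h2]
  · -- 2k < n : use the (0,0) entry
    obtain ⟨m, rfl⟩ : ∃ m, k = m + 1 := ⟨k - 1, by omega⟩
    set a := n - 2 * (m + 1) - 1 with hadef
    have hn' : n = a + (1 + (2 * m + (1 + 1))) := by omega
    have hpnnXCC : Pnn (X * C ε * C ε) := (Pnn.XC hε0).mul (Pnn.C' hε0)
    have hpnnpow : Pnn ((C ε * X) ^ m) := ((Pnn.C' hε0).mul Pnn.Xp).pow m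
    have hMM : Ple (X * C ε * C ε) ((Mlow ε * Mlow ε) 2 0) := by
      have h := entry_mul_le hM hM 2 1 0
      have e1 : Mlow ε 2 1 = X * C ε := by simp [Mlow]
      have e2 : Mlow ε 1 0 = C ε := by simp [Mlow]
      rwa [e1, e2] at h
    have hB : Ple ((C ε * X) ^ m * (X * C ε * C ε))
        ((Mlow ε ^ (2 * m) * (Mlow ε * Mlow ε)) 2 0) :=
      Ple.trans (Ple.mul hpnnpow hpnnXCC (key22 hε0 m) hMM)
        (entry_mul_le (hM.pow _) (hM.mul hM) 2 2 0)
    have hC : Ple ((C ε * X) ^ m * (X * C ε * C ε))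
        ((Mlow ε * (Mlow ε ^ (2 * m) * (Mlow ε * Mlow ε))) 0 0) := by
      have h := entry_mul_le hM ((hM.pow (2 * m)).mul (hM.mul hM)) 0 2 0
      have e : Mlow ε 0 2 = 1 := by simp [Mlow]
      rw [e, one_mul] at h
      exact Ple.trans hB h
    have hD : Ple ((C ε * X) ^ m * (X * C ε * C ε))
        ((Mlow ε ^ a * (Mlow ε * (Mlow ε ^ (2 * m) * (Mlow ε * Mlow ε)))) 0 0) := by
      have h := entry_mul_le (hM.pow a) (hM.mul ((hM.pow (2 * m)).mul (hM.mul hM))) 0 0 0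
      refine Ple.trans ?_ h
      have h2 := Ple.mul Pnn.one (hpnnpow.mul hpnnXCC) (key00 hε0 a) hC
      simpa using h2
    have hpow : Mlow ε ^ n = Mlow ε ^ a * (Mlow ε * (Mlow ε ^ (2 * m) * (Mlow ε * Mlow ε))) := by
      rw [hn', pow_add, pow_add, pow_add, pow_add, pow_one]
    have hfinal : ((C ε * X) ^ m * (X * C ε * C ε)).coeff (m + 1) ≤ (P 0 0).coeff (m + 1) := by
      have h := hD (m + 1)
      rw [← hpow] at h
      exact le_trans h (hPle 0 0 (m + 1))
    have hval : ((C ε * X) ^ m * (X * C ε * C ε)).coeff (m + 1) = ε ^ (m + 2) := by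
      have heq2 : (C ε * X) ^ m * (X * C ε * C ε) = C (ε ^ (m + 2)) * X ^ (m + 1) := by
        rw [C_pow]; ring
      rw [heq2, coeff_C_mul, coeff_X_pow]
      simp
    have hp : 0 < ε ^ (m + 2) := pow_pos hεpos _
    rw [htr]
    linarith [hval ▸ hfinal]
end

section
/- Let $n \ge 3$ and let $x_1, \dots, x_n, y_1, \dots, y_n$ be real numbers with $0 < x_j < 1$ and $0 < y_j < 1$ for all $j$. Over the polynomial ring $\mathbb{R}[s]$, define the $3 \times 3$ matrices $\hat{L}_j^*(s) := \begin{pmatrix} 0 & 1 & 1 - x_j y_j \\ x_j \, s & 0 & 0 \\ 0 & 1 & 1 \end{pmatrix}$ and set $P^*(s) := \mathrm{trace}\big(\hat{L}_1^*(s) \hat{L}_2^*(s) \cdots \hat{L}_n^*(s)\big) \in \mathbb{R}[s]$. Then for every integer $k$ with $1 \le k \le \lfloor n/2 \rfloor$, the coefficient of $s^k$ in $P^*(s)$ is strictly positive. -/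
open Matrix Polynomial

/-- The conjugated adjugate Lax matrix `L̂ⱼ*(s)` over `ℝ[s]`, with corner
invariants `x j`, `y j`. -/
noncomputable def LhatStarPoly (n : ℕ) (x y : Fin n → ℝ) (j : Fin n) :
    Matrix (Fin 3) (Fin 3) ℝ[X] :=
  !![0, 1, C (1 - x j * y j);
     C (x j) * X, 0, 0;
     0, 1, 1]

noncomputable def Amat : Matrix (Fin 3) (Fin 3) ℝ[X] := !![0,1,1; X,0,0; 0,1,1]

noncomputable def tpoly : ℕ → ℝ[X]
  | 0 => 3
  | 1 => 1
  | 2 => 1 + 2*X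
  | (m+3) => tpoly (m+2) + X * tpoly (m+1)

lemma Amat_sq : Amat ^ 2 = !![X,1,1; 0,X,X; X,1,1] := by
  rw [pow_two, Amat, Matrix.mul_fin_three]
  norm_num

lemma Amat_cube : Amat ^ 3 = Amat ^ 2 + (X : ℝ[X]) • Amat := by
  rw [pow_succ, Amat_sq, Amat, Matrix.mul_fin_three]
  ext i j
  fin_cases i <;> fin_cases j <;> simp <;> ring

lemma trace_Amat_pow : ∀ m, (Amat ^ m).trace = tpoly m := by
  intro m
  induction m using Nat.strong_induction_on with
  | _ m ih =>
    match m with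
    | 0 => simp [tpoly, Matrix.trace_one]
    | 1 => simp [tpoly, Amat, Matrix.trace_fin_three]
    | 2 => simp [tpoly, Amat_sq, Matrix.trace_fin_three]; ring
    | (m+3) =>
      have : Amat ^ (m+3) = Amat ^ (m+2) + (X:ℝ[X]) • Amat ^ (m+1) := by
        calc Amat ^ (m+3) = Amat ^ m * Amat ^ 3 := by rw [← pow_add]
        _ = Amat ^ m * (Amat ^ 2 + (X:ℝ[X]) • Amat) := by rw [Amat_cube]
        _ = Amat ^ (m+2) + (X:ℝ[X]) • Amat ^ (m+1) := by
              rw [mul_add, ← pow_add, Matrix.mul_smul, ← pow_succ]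
      rw [this, Matrix.trace_add, Matrix.trace_smul, ih (m+2) (by omega), ih (m+1) (by omega)]
      simp [tpoly, smul_eq_mul]

lemma coeff_X_mul' (p : ℝ[X]) (k : ℕ) :
    (X * p).coeff k = if k = 0 then 0 else p.coeff (k-1) := by
  match k with
  | 0 => simp
  | (k+1) => simp [Polynomial.coeff_X_mul]

lemma tpoly_coeff_nonneg : ∀ m k, 0 ≤ (tpoly m).coeff k := by
  intro m
  induction m using Nat.strong_induction_on with
  | _ m ih =>
    match m with
    | 0 => intro k; rw [tpoly]; rw [(map_ofNat C 3).symm, coeff_C]; positivity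
    | 1 => intro k; rw [tpoly]; rw [show (1:ℝ[X]) = C 1 by simp, coeff_C]; positivity
    | 2 =>
      intro k
      rw [tpoly, coeff_add, show (1:ℝ[X]) = C 1 by simp, coeff_C,
        show (2:ℝ[X]) * X = C 2 * X from by rw [map_ofNat C 2], coeff_C_mul, coeff_X]
      positivity
    | (m+3) =>
      intro k
      rw [tpoly, coeff_add, coeff_X_mul']
      have h1 := ih (m+2) (by omega) k
      have h2 := ih (m+1) (by omega) (k-1)
      split <;> linarith

lemma tpoly_coeff_pos : ∀ m, 1 ≤ m → ∀ k, k ≤ m / 2 → 0 < (tpoly m).coeff k := by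
  intro m
  induction m using Nat.strong_induction_on with
  | _ m ih =>
    match m with
    | 0 => omega
    | 1 =>
      intro _ k hk
      interval_cases k
      rw [tpoly]; norm_num
    | 2 =>
      intro _ k hk
      rw [tpoly, coeff_add, show (1:ℝ[X]) = C 1 by simp, coeff_C,
        show (2:ℝ[X]) * X = C 2 * X from by rw [map_ofNat C 2], coeff_C_mul, coeff_X]
      interval_cases k <;> norm_num
    | (m+3) =>
      intro _ k hk
      rw [tpoly, coeff_add, coeff_X_mul']
      rcases Nat.eq_zero_or_pos k with rfl | hk1
      · simpa using ih (m+2) (by omega) (by omega) 0 (by omega)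
      · have h1 := tpoly_coeff_nonneg (m+2) k
        have h2 := ih (m+1) (by omega) (by omega) (k-1) (by omega)
        rw [if_neg (by omega)]
        linarith

/-- entrywise, coefficientwise nonnegativity -/
def MNonneg (M : Matrix (Fin 3) (Fin 3) ℝ[X]) : Prop := ∀ i j k, 0 ≤ (M i j).coeff k

/-- entrywise, coefficientwise order -/
def MLE (M N : Matrix (Fin 3) (Fin 3) ℝ[X]) : Prop := ∀ i j k, (M i j).coeff k ≤ (N i j).coeff k

lemma coeff_mul_nonneg {p q : ℝ[X]} (hp : ∀ i, 0 ≤ p.coeff i) (hq : ∀ i, 0 ≤ q.coeff i) :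
    ∀ i, 0 ≤ (p * q).coeff i := by
  intro i
  rw [coeff_mul]
  exact Finset.sum_nonneg fun ab _ => mul_nonneg (hp _) (hq _)

lemma coeff_mul_mono {p p' q q' : ℝ[X]} (hp0 : ∀ i, 0 ≤ p.coeff i) (hq0 : ∀ i, 0 ≤ q.coeff i)
    (hp : ∀ i, p.coeff i ≤ p'.coeff i) (hq : ∀ i, q.coeff i ≤ q'.coeff i) :
    ∀ i, (p * q).coeff i ≤ (p' * q').coeff i := by
  intro i
  rw [coeff_mul, coeff_mul]
  refine Finset.sum_le_sum fun ab _ => ?_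
  exact mul_le_mul (hp _) (hq _) (hq0 _) (le_trans (hp0 _) (hp _))

lemma MNonneg.mul {M N : Matrix (Fin 3) (Fin 3) ℝ[X]} (hM : MNonneg M) (hN : MNonneg N) :
    MNonneg (M * N) := by
  intro i j k
  rw [Matrix.mul_apply]
  rw [Polynomial.finset_sum_coeff]
  exact Finset.sum_nonneg fun l _ => coeff_mul_nonneg (hM i l) (hN l j) k

lemma MLE.mul {M M' N N' : Matrix (Fin 3) (Fin 3) ℝ[X]} (hM0 : MNonneg M) (hN0 : MNonneg N)
    (hM : MLE M M') (hN : MLE N N') : MLE (M * N) (M' * N') := by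
  intro i j k
  rw [Matrix.mul_apply, Matrix.mul_apply, Polynomial.finset_sum_coeff,
    Polynomial.finset_sum_coeff]
  exact Finset.sum_le_sum fun l _ =>
    coeff_mul_mono (hM0 i l) (hN0 l j) (hM i l) (hN l j) k

lemma MNonneg.pow {B : Matrix (Fin 3) (Fin 3) ℝ[X]} (hB : MNonneg B) (m : ℕ) :
    MNonneg (B ^ m) := by
  induction m with
  | zero =>
    intro i j k
    rw [pow_zero]
    rcases eq_or_ne i j with h | h
    · rw [h, Matrix.one_apply_eq, coeff_one]
      split <;> norm_num
    · simp [Matrix.one_apply_ne h]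
  | succ m ih => rw [pow_succ]; exact ih.mul hB

lemma MLE.listProd {B : Matrix (Fin 3) (Fin 3) ℝ[X]} (hB : MNonneg B) :
    ∀ l : List (Matrix (Fin 3) (Fin 3) ℝ[X]), (∀ M ∈ l, MLE B M) →
      MLE (B ^ l.length) l.prod := by
  intro l
  induction l with
  | nil => intro _; simp; intro i j k; exact le_refl _
  | cons M l ih =>
    intro h
    rw [List.length_cons, List.prod_cons, pow_succ']
    exact MLE.mul hB (hB.pow l.length) (h M List.mem_cons_self)
      (ih fun N hN => h N (List.mem_cons_of_mem M hN))

theorem odd_invariants_positive_convex (n : ℕ) (hn : 3 ≤ n)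
    (x y : Fin n → ℝ) (hx : ∀ j, 0 < x j ∧ x j < 1) (hy : ∀ j, 0 < y j ∧ y j < 1) :
    ∀ k : ℕ, 1 ≤ k → k ≤ n / 2 →
      0 < (((List.ofFn fun j : Fin n => LhatStarPoly n x y j).prod).trace).coeff k := by
  intro k hk1 hk2
  have hne : Nonempty (Fin n) := ⟨⟨0, by omega⟩⟩
  set F : Fin n → ℝ := fun j => min (x j) (1 - x j * y j) with hF
  set ε : ℝ := Finset.univ.inf' Finset.univ_nonempty F with hεdef
  have hε : 0 < ε := by
    rw [hεdef, Finset.lt_inf'_iff]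
    intro j _
    have h1 := (hx j).1
    have h2 := (hx j).2
    have h3 := (hy j).1
    have h4 := (hy j).2
    have : x j * y j < 1 := by nlinarith
    simp [hF]
    constructor <;> nlinarith
  have hεx : ∀ j, ε ≤ x j := fun j =>
    le_trans (Finset.inf'_le F (Finset.mem_univ j)) (min_le_left _ _)
  have hεxy : ∀ j, ε ≤ 1 - x j * y j := fun j =>
    le_trans (Finset.inf'_le F (Finset.mem_univ j)) (min_le_right _ _)
  have hε1 : ε ≤ 1 := le_trans (hεx ⟨0, by omega⟩) (hx _).2.le
  set B : Matrix (Fin 3) (Fin 3) ℝ[X] := (C ε : ℝ[X]) • Amat with hB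
  have hBnn : MNonneg B := by
    intro i j m
    fin_cases i <;> fin_cases j <;>
      simp [hB, Amat, Matrix.smul_apply, smul_eq_mul, coeff_C_mul, coeff_one, coeff_X, coeff_C] <;>
      split_ifs <;> simp [hε.le]
  have hBL : ∀ j, MLE B (LhatStarPoly n x y j) := by
    intro j i i' m
    have h0 := hε.le
    have h1 := hεx j
    have h2 := hεxy j
    have h3 := hε1
    fin_cases i <;> fin_cases i' <;>
      simp [hB, LhatStarPoly, Amat, Matrix.smul_apply, smul_eq_mul, coeff_C_mul,
        coeff_one, coeff_X, coeff_C] <;>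
      split_ifs <;> simp [hε.le, h1, h2, h3]
  have key : MLE (B ^ n) (List.ofFn fun j : Fin n => LhatStarPoly n x y j).prod := by
    have := MLE.listProd hBnn (List.ofFn fun j : Fin n => LhatStarPoly n x y j) ?_
    · rwa [List.length_ofFn] at this
    · intro M hM
      rw [List.mem_ofFn] at hM
      obtain ⟨j, rfl⟩ := hM
      exact hBL j
  have h1 : ((B ^ n).trace).coeff k ≤
      (((List.ofFn fun j : Fin n => LhatStarPoly n x y j).prod).trace).coeff k := by
    rw [Matrix.trace_fin_three, Matrix.trace_fin_three, coeff_add, coeff_add,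
      coeff_add, coeff_add]
    exact add_le_add (add_le_add (key 0 0 k) (key 1 1 k)) (key 2 2 k)
  have h2 : ((B ^ n).trace).coeff k = ε ^ n * (tpoly n).coeff k := by
    rw [hB, _root_.smul_pow, Matrix.trace_smul, trace_Amat_pow, smul_eq_mul, ← C_pow,
      coeff_C_mul]
  have h3 : 0 < ε ^ n * (tpoly n).coeff k :=
    mul_pos (pow_pos hε n) (tpoly_coeff_pos n (by omega) k hk2)
  rw [h2] at h1
  linarith
end
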